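/- Let A ∈ ℂ^{n×n}, λ ∈ ℂ, and v ∈ ℂ^n with ‖v‖ = 1 and Av = λv. Then λ is a simple eigenvalue of A (a root of multiplicity one of the characteristic polynomial of A) if and only if the linear map A_{λ,v} : T_v → T_v is invertible. -/

import Mathlib

noncomputable section

open Matrix Set

/-- `T_v`: the orthogonal complement of `v` in `ℂ^n`. -/
def Tv {n : ℕ} (v : EuclideanSpace ℂ (Fin n)) : Submodule ℂ (EuclideanSpace ℂ (Fin n)) :=
  (ℂ ∙ v)ᗮ

/-- The linear map `A_{λ,v} : T_v → T_v`, `x ↦ P_{v⊥}((A - λ·Id) x)`. -/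
def Alv {n : ℕ} (A : Matrix (Fin n) (Fin n) ℂ) (lam : ℂ) (v : EuclideanSpace ℂ (Fin n)) :
    Tv v →ₗ[ℂ] Tv v :=
  (Tv v).orthogonalProjection.toLinearMap ∘ₗ
    (Matrix.toEuclideanLin A - lam • LinearMap.id) ∘ₗ (Tv v).subtype

/-- `A_{λ,v}` as a continuous linear map. -/
def AlvC {n : ℕ} (A : Matrix (Fin n) (Fin n) ℂ) (lam : ℂ) (v : EuclideanSpace ℂ (Fin n)) :
    Tv v →L[ℂ] Tv v :=
  LinearMap.toContinuousLinearMap (Alv A lam v)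

/-- Frobenius norm of a complex matrix. -/
def frobNorm {n : ℕ} (A : Matrix (Fin n) (Fin n) ℂ) : ℝ :=
  Real.sqrt (∑ i, ∑ j, ‖A i j‖ ^ 2)

/-- The condition number `μ(A,λ,v) = ‖A‖_F ‖A_{λ,v}^{-1}‖`. -/
def mu {n : ℕ} (A : Matrix (Fin n) (Fin n) ℂ) (lam : ℂ) (v : EuclideanSpace ℂ (Fin n)) : ℝ :=
  frobNorm A * ‖(AlvC A lam v).inverse‖

/-- Fubini-Study (angular) distance. -/
def dP {n : ℕ} (v w : EuclideanSpace ℂ (Fin n)) : ℝ :=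
  Real.arccos (‖(inner ℂ v w : ℂ)‖ / (‖v‖ * ‖w‖))

/-- The distance on triples. -/
def distT {n : ℕ} (A : Matrix (Fin n) (Fin n) ℂ) (lam : ℂ) (v : EuclideanSpace ℂ (Fin n))
    (A' : Matrix (Fin n) (Fin n) ℂ) (lam' : ℂ) (v' : EuclideanSpace ℂ (Fin n)) : ℝ :=
  Real.sqrt ((frobNorm ((frobNorm A)⁻¹ • A - (frobNorm A')⁻¹ • A')) ^ 2 +
    ‖lam / (frobNorm A : ℂ) - lam' / (frobNorm A' : ℂ)‖ ^ 2 + dP v v' ^ 2)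

open Polynomial

-- aux 1: block matrix of a linear map wrt a product basis
lemma toMatrix_prod_basis {R M₁ M₂ : Type*} [CommRing R] [AddCommGroup M₁] [AddCommGroup M₂]
    [Module R M₁] [Module R M₂] {ι₁ ι₂ : Type*} [Fintype ι₁] [Fintype ι₂]
    [DecidableEq ι₁] [DecidableEq ι₂]
    (b₁ : Module.Basis ι₁ R M₁) (b₂ : Module.Basis ι₂ R M₂) (f : M₁ × M₂ →ₗ[R] M₁ × M₂) :
    LinearMap.toMatrix (b₁.prod b₂) (b₁.prod b₂) f =
      Matrix.fromBlocks
        (LinearMap.toMatrix b₁ b₁ (LinearMap.fst R M₁ M₂ ∘ₗ f ∘ₗ LinearMap.inl R M₁ M₂))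
        (LinearMap.toMatrix b₂ b₁ (LinearMap.fst R M₁ M₂ ∘ₗ f ∘ₗ LinearMap.inr R M₁ M₂))
        (LinearMap.toMatrix b₁ b₂ (LinearMap.snd R M₁ M₂ ∘ₗ f ∘ₗ LinearMap.inl R M₁ M₂))
        (LinearMap.toMatrix b₂ b₂ (LinearMap.snd R M₁ M₂ ∘ₗ f ∘ₗ LinearMap.inr R M₁ M₂)) := by
  ext i j
  cases i <;> cases j <;>
    simp [LinearMap.toMatrix_apply, Module.Basis.prod_apply, Module.Basis.prod_repr_inl, Module.Basis.prod_repr_inr]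

-- aux 2: charpoly of 1x1 matrix
lemma charpoly_fin_one {R : Type*} [CommRing R] (M : Matrix (Fin 1) (Fin 1) R) :
    M.charpoly = X - C (M 0 0) := by
  rw [Matrix.charpoly, Matrix.det_fin_one]
  simp [charmatrix_apply]

-- aux 3: translation of charpoly
lemma charpoly_sub_smul_one {R : Type*} [CommRing R] {m : Type*} [Fintype m] [DecidableEq m]
    (M : Matrix m m R) (μ : R) :
    (M - μ • (1 : Matrix m m R)).charpoly = M.charpoly.comp (X + C μ) := by
  have : M.charpoly.comp (X + C μ) = Polynomial.aeval (X + C μ) M.charpoly := by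
    simp [Polynomial.aeval_def, Polynomial.comp, Polynomial.eval₂_def, algebraMap_eq]
  rw [this, Matrix.charpoly, Matrix.charpoly, AlgHom.map_det]
  congr 1
  ext i j
  by_cases h : i = j
  · subst h; simp [charmatrix_apply]; ring
  · simp [charmatrix_apply, h, Matrix.one_apply]

set_option maxHeartbeats 1000000 in
set_option synthInstance.maxHeartbeats 100000 in
/-- Proposition: `λ` is a simple eigenvalue of `A` iff `A_{λ,v}` is invertible. -/
theorem simple_iff_Alv_bijective {n : ℕ} (A : Matrix (Fin n) (Fin n) ℂ) (lam : ℂ)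
    (v : EuclideanSpace ℂ (Fin n)) (hv : ‖v‖ = 1)
    (heig : Matrix.toEuclideanLin A v = lam • v) :
    (Matrix.charpoly A).rootMultiplicity lam = 1 ↔
      Function.Bijective (Alv A lam v) := by
  classical
  have hv0 : v ≠ 0 := by
    intro h; rw [h, norm_zero] at hv; exact one_ne_zero hv.symm
  set g : EuclideanSpace ℂ (Fin n) →ₗ[ℂ] EuclideanSpace ℂ (Fin n) :=
    Matrix.toEuclideanLin A - lam • LinearMap.id with hg
  have hgv1 : g v = 0 := by
    simp [hg, LinearMap.sub_apply, heig]
  have hgv : ∀ x ∈ (ℂ ∙ v), g x = 0 := by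
    intro x hx
    obtain ⟨c, rfl⟩ := Submodule.mem_span_singleton.mp hx
    rw [LinearMap.map_smul, hgv1, smul_zero]
  have hb : LinearMap.toMatrix (PiLp.basisFun 2 ℂ (Fin n))
      (PiLp.basisFun 2 ℂ (Fin n)) g = A - lam • (1 : Matrix (Fin n) (Fin n) ℂ) := by
    rw [hg, map_sub, _root_.map_smul]
    congr 1
    · rw [Matrix.toEuclideanLin_eq_toLin, LinearMap.toMatrix_toLin]
    · rw [LinearMap.toMatrix_id]
  have hcg : g.charpoly = (A - lam • (1 : Matrix (Fin n) (Fin n) ℂ)).charpoly := by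
    rw [← hb, LinearMap.charpoly_toMatrix]
  have hshift : (Matrix.charpoly A).rootMultiplicity lam = g.charpoly.rootMultiplicity 0 := by
    rw [hcg, charpoly_sub_smul_one, ← rootMultiplicity_eq_rootMultiplicity]
  set S : Submodule ℂ (EuclideanSpace ℂ (Fin n)) := ℂ ∙ v with hS
  have hc : IsCompl S (Tv v) := Submodule.isCompl_orthogonal_of_hasOrthogonalProjection
  set e := Submodule.prodEquivOfIsCompl S (Tv v) hc with he
  set F : (S × Tv v) →ₗ[ℂ] (S × Tv v) := e.symm.conj g with hF
  have hcF : F.charpoly = g.charpoly := LinearEquiv.charpoly_conj _ _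
  have hF0 : ∀ s : S, F (s, 0) = 0 := by
    intro s
    have h1 : e (s, 0) = (s : EuclideanSpace ℂ (Fin n)) := by
      simp [he, Submodule.coe_prodEquivOfIsCompl']
    rw [hF, LinearEquiv.conj_apply]
    simp only [LinearMap.comp_apply, LinearEquiv.coe_coe, LinearEquiv.symm_symm]
    rw [h1, hgv _ s.2, map_zero]
  have hFinl : F ∘ₗ LinearMap.inl ℂ S (Tv v) = 0 := by
    apply LinearMap.ext
    intro s
    simp only [LinearMap.comp_apply, LinearMap.inl_apply, LinearMap.zero_apply]
    exact hF0 s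
  have hsnd : ∀ x : EuclideanSpace ℂ (Fin n),
      (e.symm x).2 = (Tv v).orthogonalProjection x := by
    intro x
    have hx : x = ((e.symm x).1 : EuclideanSpace ℂ (Fin n)) + ((e.symm x).2 :
        EuclideanSpace ℂ (Fin n)) := by
      conv_lhs => rw [← e.apply_symm_apply x]
      rw [he, Submodule.coe_prodEquivOfIsCompl']
    have h1 : ((e.symm x).1 : EuclideanSpace ℂ (Fin n)) ∈ (Tv v)ᗮ :=
      Submodule.le_orthogonal_orthogonal S (e.symm x).1.2
    calc (e.symm x).2
        = (Tv v).orthogonalProjection ((e.symm x).1 : EuclideanSpace ℂ (Fin n))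
            + (Tv v).orthogonalProjection ((e.symm x).2 : EuclideanSpace ℂ (Fin n)) := by
          rw [Submodule.orthogonalProjectionOnto_apply_of_mem_orthogonal h1,
            Submodule.orthogonalProjectionOnto_mem_subspace_eq_self, zero_add]
      _ = (Tv v).orthogonalProjection x := by rw [← map_add]; congr 1; exact hx.symm
  have hD : LinearMap.snd ℂ S (Tv v) ∘ₗ F ∘ₗ LinearMap.inr ℂ S (Tv v) = Alv A lam v := by
    apply LinearMap.ext
    intro t
    have het : e (0, t) = (t : EuclideanSpace ℂ (Fin n)) := by
      simp [he, Submodule.coe_prodEquivOfIsCompl']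
    simp only [LinearMap.comp_apply, LinearMap.inr_apply, LinearMap.snd_apply]
    rw [hF, LinearEquiv.conj_apply]
    simp only [LinearMap.comp_apply, LinearEquiv.coe_coe, LinearEquiv.symm_symm]
    rw [het, hsnd (g t)]
    rfl
  have hrank : Module.finrank ℂ S = 1 := finrank_span_singleton hv0
  set b₁ : Module.Basis (Fin 1) ℂ S := Module.finBasisOfFinrankEq ℂ S hrank with hb₁
  set b₂ : Module.Basis (Fin (Module.finrank ℂ (Tv v))) ℂ (Tv v) := Module.finBasis ℂ (Tv v) with hb₂
  have hcF2 : F.charpoly = X * (Alv A lam v).charpoly := by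
    rw [← LinearMap.charpoly_toMatrix F (b₁.prod b₂), toMatrix_prod_basis]
    have h11 : LinearMap.fst ℂ S (Tv v) ∘ₗ F ∘ₗ LinearMap.inl ℂ S (Tv v) = 0 := by
      rw [hFinl, LinearMap.comp_zero]
    have h21 : LinearMap.snd ℂ S (Tv v) ∘ₗ F ∘ₗ LinearMap.inl ℂ S (Tv v) = 0 := by
      rw [hFinl, LinearMap.comp_zero]
    rw [h11, h21, hD]
    rw [show (LinearMap.toMatrix b₁ b₁) (0 : ↥S →ₗ[ℂ] ↥S) = 0 from LinearEquiv.map_zero _,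
      show (LinearMap.toMatrix b₁ b₂) (0 : ↥S →ₗ[ℂ] ↥(Tv v)) = 0 from LinearEquiv.map_zero _]
    rw [Matrix.charpoly_fromBlocks_zero₂₁, charpoly_fin_one]
    simp [LinearMap.charpoly_toMatrix]
  have hq0 : (Alv A lam v).charpoly ≠ 0 := (Alv A lam v).charpoly_monic.ne_zero
  have hmul : g.charpoly.rootMultiplicity 0
      = 1 + ((Alv A lam v).charpoly).rootMultiplicity 0 := by
    rw [← hcF, hcF2, Polynomial.rootMultiplicity_mul (mul_ne_zero X_ne_zero hq0)]
    congr 1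
    simpa using Polynomial.rootMultiplicity_X_sub_C_self (x := (0 : ℂ))
  rw [hshift, hmul]
  have hiff : ((Alv A lam v).charpoly).rootMultiplicity 0 = 0 ↔
      Function.Bijective (Alv A lam v) := by
    rw [show ((Alv A lam v).charpoly).rootMultiplicity 0 = 0 ↔
        ¬ (Alv A lam v).charpoly.IsRoot 0 by
      rw [Polynomial.rootMultiplicity_eq_zero_iff]
      exact ⟨fun h hr => hq0 (h hr), fun h hr => absurd hr h⟩]
    have h2 : ¬ (Alv A lam v).charpoly.IsRoot 0 ↔ Function.Injective (Alv A lam v) := by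
      rw [Polynomial.IsRoot.def, ← Polynomial.coeff_zero_eq_eval_zero,
        ← Polynomial.constantCoeff_apply, LinearMap.charpoly_constantCoeff_eq_zero_iff,
        injective_iff_map_eq_zero (Alv A lam v)]
      push_neg
      constructor
      · intro h m hm
        by_contra hm0
        exact h m hm0 hm
      · intro h m hm hz
        exact hm (h m hz)
    rw [h2]
    exact ⟨fun h => ⟨h, (LinearMap.injective_iff_surjective).mp h⟩, fun h => h.1⟩
  rw [← hiff]
  omega


end
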